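/- arXiv:2508.03930 — 2 statements merged into one kernel-verified Lean document; each statement's English description precedes it below -/
import Mathlib

section
/- If two runs R and R' of a string T generate a common square (frag-squares(R) ∩ frag-squares(R') ≠ ∅), then R and R' have the same Lyndon root. -/
open List

variable {α : Type*}

/-- `frag T a b` is the fragment `T[a..b]` (inclusive, 0-based). -/
def frag (T : List α) (a b : ℕ) : List α := (T.drop a).take (b + 1 - a)

/-- `p` is a period of `S`: `0 < p ≤ |S|` and `S[i] = S[i+p]` for all valid `i`. -/
def IsPeriodOf (p : ℕ) (S : List α) : Prop :=
  0 < p ∧ p ≤ S.length ∧ ∀ i : ℕ, i + p < S.length → S[i]? = S[i + p]?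

/-- The smallest period of `S`. -/
noncomputable def minPeriod (S : List α) : ℕ := sInf {p | IsPeriodOf p S}

/-- `T[a..b]` is a run: periodic (its smallest period occurs at least twice)
and maximal on both sides. -/
def IsRun (T : List α) (a b : ℕ) : Prop :=
  a ≤ b ∧ b < T.length ∧
  2 * minPeriod (frag T a b) ≤ b + 1 - a ∧
  (a = 0 ∨ T[a - 1]? ≠ T[a - 1 + minPeriod (frag T a b)]?) ∧
  (b = T.length - 1 ∨ T[b + 1]? ≠ T[b + 1 - minPeriod (frag T a b)]?)

/-- `W` occurs in `T` at position `s`. -/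
def OccursAt (T : List α) (s : ℕ) (W : List α) : Prop :=
  s + W.length ≤ T.length ∧ (T.drop s).take W.length = W

/-- The set of distinct square substrings of `T`. -/
def Squares (T : List α) : Set (List α) :=
  {W | ∃ X : List α, X ≠ [] ∧ W = X ++ X ∧ W <:+: T}

/-- A non-empty string is primitive if it is not a proper power. -/
def Primitive (U : List α) : Prop :=
  U ≠ [] ∧ ∀ (V : List α) (k : ℕ), U = (List.replicate k V).flatten → k = 1

/-- Cyclic rotation moving the first `c` characters to the end. -/
def rot (c : ℕ) (L : List α) : List α := L.drop c ++ L.take c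

/-- `lam` is the Lyndon root of a periodic string `S`: the lexicographically
smallest rotation of `S[0..per(S))`. -/
def LyndonRootOf [LinearOrder α] (S lam : List α) : Prop :=
  (∃ c < minPeriod S, lam = rot c (S.take (minPeriod S))) ∧
  ∀ c < minPeriod S, lam ≤ rot c (S.take (minPeriod S))

/-- Squares generated by a periodic string `U`: squares contained in `U`
whose smallest period equals that of `U`. -/
def FragSquares (U : List α) : Set (List α) :=
  {W | ∃ X : List α, X ≠ [] ∧ W = X ++ X ∧ W <:+: U ∧ minPeriod W = minPeriod U}

/-- `subper U`: the minimum of `per(X)` over squares `X²` generated by `U`. -/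
noncomputable def subper (U : List α) : ℕ :=
  sInf {q | ∃ X : List α, X ≠ [] ∧ (X ++ X) <:+: U ∧
    minPeriod (X ++ X) = minPeriod U ∧ minPeriod X = q}

/-- Fragments `[a..b]` and `[a'..b']` are neighboring:
`[a-1..b+1] ∩ [a'..b'] ≠ ∅`. -/
def Neighboring (a b a' b' : ℕ) : Prop := a ≤ b' + 1 ∧ a' ≤ b + 1

/-- `T[x..y]` is a layer of the pyramid of the neighboring runs
`F = T[a..b]` and `F' = T[a'..b']` (with `a < a'`): a subperiodic run `R`
with `subper(R) = per(F)` such that `R ∩ (F ∪ F')` is periodic with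
period `per(R)`. -/
def IsLayer (T : List α) (a b a' b' x y : ℕ) : Prop :=
  IsRun T x y ∧
  4 * subper (frag T x y) ≤ minPeriod (frag T x y) ∧
  subper (frag T x y) = minPeriod (frag T a b) ∧
  2 * minPeriod (frag T x y) ≤ min y b' + 1 - max x a ∧
  IsPeriodOf (minPeriod (frag T x y)) (frag T (max x a) (min y b'))

/-- A `τ`-synchronizing set of `T` (Kempa–Kociumaka): consistency and density. -/
def SyncSet (T : List α) (τ : ℕ) (S : Set ℕ) : Prop :=
  (∀ i ∈ S, i + 2 * τ ≤ T.length) ∧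
  (∀ i j : ℕ, i + 2 * τ ≤ T.length → j + 2 * τ ≤ T.length →
    (T.drop i).take (2 * τ) = (T.drop j).take (2 * τ) → (i ∈ S ↔ j ∈ S)) ∧
  (∀ i : ℕ, i + 3 * τ - 1 ≤ T.length →
    ((∀ k ∈ S, k < i ∨ i + τ ≤ k) ↔
      3 * minPeriod ((T.drop i).take (3 * τ - 1)) ≤ τ))


lemma rot_length (c : ℕ) (L : List α) : (rot c L).length = L.length := by
  simp [rot]; omega

lemma rot_zero (L : List α) : rot 0 L = L := by simp [rot]

lemma rot_full (L : List α) : rot L.length L = L := by simp [rot]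

lemma rot_rot (c d : ℕ) (L : List α) (h : c + d ≤ L.length) :
    rot d (rot c L) = rot (c + d) L := by
  unfold rot
  have hd : d ≤ (L.drop c).length := by simp; omega
  rw [List.drop_append, List.take_append]
  have h1 : d - (L.drop c).length = 0 := by omega
  rw [h1]
  simp only [List.drop_zero, List.take_zero, List.append_nil, List.drop_drop]
  rw [List.take_add, List.append_assoc]

/-- Set of all cyclic rotations of `L`. -/
def RotSet (L : List α) : Set (List α) := {M | ∃ c ≤ L.length, M = rot c L}

lemma self_mem_rotSet (L : List α) : L ∈ RotSet L := ⟨0, Nat.zero_le _, (rot_zero L).symm⟩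

lemma rot_rot_general (c d : ℕ) (L : List α) (hc : c ≤ L.length) (hd : d ≤ L.length) :
    ∃ e ≤ L.length, rot d (rot c L) = rot e L := by
  by_cases h : c + d ≤ L.length
  · exact ⟨c + d, h, rot_rot c d L h⟩
  · refine ⟨c + d - L.length, by omega, ?_⟩
    have he : c + (L.length - c) = L.length := by omega
    have h1 : rot (L.length - c) (rot c L) = L := by
      rw [rot_rot c _ L (by omega), he, rot_full]
    have h2 : rot (c + d - L.length) (rot (L.length - c) (rot c L)) = rot d (rot c L) := by
      rw [rot_rot _ _ (rot c L) (by rw [rot_length]; omega)]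
      congr 1; omega
    rw [← h2, h1]

lemma rot_mem_rotSet {L M : List α} (hM : M ∈ RotSet L) (d : ℕ) (hd : d ≤ L.length) :
    rot d M ∈ RotSet L := by
  obtain ⟨c, hc, rfl⟩ := hM
  obtain ⟨e, he, heq⟩ := rot_rot_general c d L hc hd
  exact ⟨e, he, heq⟩

lemma rotSet_symm {L M : List α} (hM : M ∈ RotSet L) : L ∈ RotSet M := by
  obtain ⟨c, hc, rfl⟩ := hM
  refine ⟨L.length - c, by rw [rot_length]; omega, ?_⟩
  rw [rot_rot c _ L (by omega)]
  have : c + (L.length - c) = L.length := by omega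
  rw [this, rot_full]

lemma rotSet_eq {L M : List α} (hM : M ∈ RotSet L) : RotSet M = RotSet L := by
  have hlen : M.length = L.length := by obtain ⟨c, hc, rfl⟩ := hM; exact rot_length c L
  ext N
  constructor
  · rintro ⟨d, hd, rfl⟩
    exact rot_mem_rotSet hM d (by omega)
  · rintro ⟨d, hd, rfl⟩
    exact rot_mem_rotSet (rotSet_symm hM) d (by omega)

lemma minPeriod_isPeriodOf {S : List α} (h : S ≠ []) : IsPeriodOf (minPeriod S) S := by
  have hS : IsPeriodOf S.length S :=
    ⟨List.length_pos_iff.mpr h, le_refl _, fun i hi => absurd hi (by omega)⟩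
  have hne : {q | IsPeriodOf q S}.Nonempty := ⟨S.length, hS⟩
  exact Nat.sInf_mem hne

lemma minPeriod_sq_le {X : List α} (hX : X ≠ []) : minPeriod (X ++ X) ≤ X.length := by
  apply Nat.sInf_le
  refine ⟨List.length_pos_iff.mpr hX, by simp, ?_⟩
  intro i hi
  have hi' : i < X.length := by simp [List.length_append] at hi; omega
  rw [List.getElem?_append_left hi',
    List.getElem?_append_right (by omega : X.length ≤ i + X.length)]
  congr 1; omega

lemma window_mem_rotSet {S : List α} {p : ℕ} (hp : IsPeriodOf p S) :
    ∀ s, s + p ≤ S.length → (S.drop s).take p ∈ RotSet (S.take p) := by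
  obtain ⟨hp0, hple, hper⟩ := hp
  intro s
  induction s with
  | zero => intro _; simpa using self_mem_rotSet (S.take p)
  | succ s ih =>
    intro hs
    have hs' : s + p ≤ S.length := by omega
    have key : (S.drop (s+1)).take p = rot 1 ((S.drop s).take p) := by
      have e1 : ((S.drop s).take p).drop 1 = (S.drop (s+1)).take (p-1) := by
        rw [List.drop_take, List.drop_drop]
      have e2 : ((S.drop s).take p).take 1 = (S[s]?).toList := by
        rw [List.take_take, min_eq_left (by omega : 1 ≤ p)]
        have : (1 : ℕ) = 0 + 1 := rfl
        rw [this, List.take_succ]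
        simp [List.getElem?_drop]
      have e3 : (S.drop (s+1)).take p
          = (S.drop (s+1)).take (p-1) ++ (S[s+p]?).toList := by
        conv_lhs => rw [show p = (p-1) + 1 by omega, List.take_succ]
        congr 1
        rw [List.getElem?_drop]
        congr 2
        omega
      rw [e3]
      unfold rot
      rw [e1, e2, hper s (by omega)]
    rw [key]
    have hlen1 : (1 : ℕ) ≤ (S.take p).length := by
      rw [List.length_take]; omega
    exact rot_mem_rotSet (ih hs') 1 hlen1

lemma take_mem_rotSet_of_infix {U X : List α} {p : ℕ} (hinf : (X ++ X) <:+: U)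
    (hper : IsPeriodOf p U) (hle : p ≤ X.length) :
    X.take p ∈ RotSet (U.take p) := by
  obtain ⟨P, Q, hU⟩ := hinf
  have hlen : U.length = P.length + (X.length + X.length) + Q.length := by
    rw [← hU]; simp [List.length_append]; omega
  have hwin := window_mem_rotSet hper P.length (by omega)
  have heq : (U.drop P.length).take p = X.take p := by
    rw [← hU, List.append_assoc, List.drop_left,
      List.take_append_of_le_length (by simp; omega),
      List.take_append_of_le_length hle]
  rwa [heq] at hwin

lemma lyndonRootOf_iff [LinearOrder α] {S lam : List α} {p : ℕ} (hp : minPeriod S = p)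
    (hpos : 0 < p) (hle : p ≤ S.length) :
    LyndonRootOf S lam ↔
      lam ∈ RotSet (S.take p) ∧ ∀ M ∈ RotSet (S.take p), lam ≤ M := by
  subst hp
  have hlen : (S.take (minPeriod S)).length = minPeriod S := by
    rw [List.length_take]; omega
  have hfull : rot (minPeriod S) (S.take (minPeriod S)) = S.take (minPeriod S) := by
    have := rot_full (S.take (minPeriod S))
    rwa [hlen] at this
  unfold LyndonRootOf RotSet
  constructor
  · rintro ⟨⟨c, hc, rfl⟩, hmin⟩
    refine ⟨⟨c, by omega, rfl⟩, ?_⟩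
    rintro M ⟨d, hd, rfl⟩
    rw [hlen] at hd
    rcases eq_or_lt_of_le hd with h | h
    · have h0 := hmin 0 hpos
      rw [rot_zero] at h0
      rw [h, hfull]
      exact h0
    · exact hmin d h
  · rintro ⟨⟨c, hc, rfl⟩, hmin⟩
    rw [hlen] at hc
    constructor
    · rcases eq_or_lt_of_le hc with h | h
      · exact ⟨0, hpos, by rw [h, hfull, rot_zero]⟩
      · exact ⟨c, h, rfl⟩
    · intro c' hc'
      exact hmin _ ⟨c', by omega, rfl⟩

/-- If two runs of `T` generate a common square, they have the same
Lyndon root. -/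
theorem common_square_same_lyndon_root [LinearOrder α] (T : List α)
    (a b a' b' : ℕ) (h1 : IsRun T a b) (h2 : IsRun T a' b')
    (X : List α) (hX : X ≠ [])
    (g1 : (X ++ X) <:+: frag T a b ∧
      minPeriod (X ++ X) = minPeriod (frag T a b))
    (g2 : (X ++ X) <:+: frag T a' b' ∧
      minPeriod (X ++ X) = minPeriod (frag T a' b')) :
    ∀ lam : List α, LyndonRootOf (frag T a b) lam ↔ LyndonRootOf (frag T a' b') lam := by
  intro lam
  set U := frag T a b with hUdef
  set V := frag T a' b' with hVdef
  have hUne : U ≠ [] := by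
    apply List.ne_nil_of_length_pos
    rw [hUdef]
    unfold frag
    rw [List.length_take, List.length_drop]
    obtain ⟨hab, hb, -⟩ := h1
    omega
  have hVne : V ≠ [] := by
    apply List.ne_nil_of_length_pos
    rw [hVdef]
    unfold frag
    rw [List.length_take, List.length_drop]
    obtain ⟨hab, hb, -⟩ := h2
    omega
  set p := minPeriod (X ++ X) with hpdef
  have hU1 : minPeriod U = p := g1.2.symm
  have hV1 : minPeriod V = p := g2.2.symm
  have hperU : IsPeriodOf p U := hU1 ▸ minPeriod_isPeriodOf hUne
  have hperV : IsPeriodOf p V := hV1 ▸ minPeriod_isPeriodOf hVne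
  have hple : p ≤ X.length := minPeriod_sq_le hX
  have hXU : X.take p ∈ RotSet (U.take p) := take_mem_rotSet_of_infix g1.1 hperU hple
  have hXV : X.take p ∈ RotSet (V.take p) := take_mem_rotSet_of_infix g2.1 hperV hple
  have E : RotSet (U.take p) = RotSet (V.take p) :=
    (rotSet_eq hXU).symm.trans (rotSet_eq hXV)
  rw [lyndonRootOf_iff hU1 hperU.1 hperU.2.1, lyndonRootOf_iff hV1 hperV.1 hperV.2.1, E]
end

section
/- Let F, F' be two neighboring runs of equal period p in T with F to the left of F', let R be a run with subper(R) = p such that R ∩ (F ∪ F') is periodic with period per(R) (a layer of the pyramid P(F,F')), and let U^2 be a square generated by R ∩ (F ∪ F'). Then the first half of U^2 is contained in F and the second half is contained in F'. -/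
open List

variable {α : Type*}

lemma minPeriod_isPeriod (S : List α) (h : S ≠ []) : IsPeriodOf (minPeriod S) S := by
  have hmem : S.length ∈ {r | IsPeriodOf r S} :=
    ⟨List.length_pos_iff.mpr h, le_refl _, fun _ hi => absurd hi (by omega)⟩
  exact Nat.sInf_mem ⟨S.length, hmem⟩

lemma minPeriod_le {S : List α} {r : ℕ} (h : IsPeriodOf r S) : minPeriod S ≤ r :=
  Nat.sInf_le h

lemma frag_length (T : List α) {u v : ℕ} (huv : u ≤ v) (hv : v < T.length) :
    (frag T u v).length = v + 1 - u := by
  simp [frag]; omega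

lemma frag_get? (T : List α) {u v : ℕ} {i : ℕ} (hi : i < v + 1 - u) :
    (frag T u v)[i]? = T[u + i]? := by
  rw [frag, List.getElem?_take_of_lt hi, List.getElem?_drop]

lemma frag_ne_nil (T : List α) {u v : ℕ} (huv : u ≤ v) (hv : v < T.length) :
    frag T u v ≠ [] := by
  have h := frag_length T huv hv
  intro hh
  rw [hh] at h
  simp at h
  omega

lemma period_of_frag (T : List α) {u v r : ℕ} (huv : u ≤ v) (hv : v < T.length)
    (h : IsPeriodOf r (frag T u v)) :
    ∀ k, u ≤ k → k + r ≤ v → T[k]? = T[k + r]? := by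
  intro k hk hkr
  obtain ⟨hr0, hrle, hco⟩ := h
  have hlen := frag_length T huv hv
  have h2 : k - u + r < (frag T u v).length := by omega
  have hco2 := hco (k - u) h2
  rwa [frag_get? T (by omega : k - u < v + 1 - u),
    frag_get? T (by omega : k - u + r < v + 1 - u),
    show u + (k - u) = k by omega, show u + (k - u + r) = k + r by omega] at hco2

lemma frag_of_period (T : List α) {u v r : ℕ} (huv : u ≤ v) (hv : v < T.length)
    (hr : 0 < r) (hrle : r ≤ v + 1 - u)
    (h : ∀ k, u ≤ k → k + r ≤ v → T[k]? = T[k + r]?) :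
    IsPeriodOf r (frag T u v) := by
  refine ⟨hr, ?_, ?_⟩
  · rw [frag_length T huv hv]; exact hrle
  · intro i hi
    rw [frag_length T huv hv] at hi
    rw [frag_get? T (by omega), frag_get? T (by omega)]
    have hh := h (u + i) (by omega) (by omega)
    rwa [show u + i + r = u + (i + r) by omega] at hh

lemma chain_period (T : List α) {q q' x y m n : ℕ} (hq : 0 < q) (hq' : 0 < q')
    (hxm : x ≤ m) (hny : n ≤ y) (hwin : m + q + q' ≤ n + 1)
    (hQ : ∀ k, x ≤ k → k + q ≤ y → T[k]? = T[k + q]?)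
    (hQ' : ∀ k, m ≤ k → k + q' ≤ n → T[k]? = T[k + q']?) :
    ∀ k, x ≤ k → k + q' ≤ y → T[k]? = T[k + q']? := by
  have step1 : ∀ k, m ≤ k → k + q' ≤ y → T[k]? = T[k + q']? := by
    intro k
    induction k using Nat.strong_induction_on with
    | _ k ih =>
      intro hmk hky
      by_cases h : k + q' ≤ n
      · exact hQ' k hmk h
      · have hk : m + q ≤ k := by omega
        have e1 := hQ (k - q) (by omega) (by omega)
        rw [show k - q + q = k by omega] at e1
        have e2 := hQ (k - q + q') (by omega) (by omega)
        rw [show k - q + q' + q = k + q' by omega] at e2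
        have e3 := ih (k - q) (by omega) (by omega) (by omega)
        rw [← e1, ← e2]
        exact e3
  have step2 : ∀ d k, m - k = d → x ≤ k → k + q' ≤ y → T[k]? = T[k + q']? := by
    intro d
    induction d using Nat.strong_induction_on with
    | _ d ih =>
      intro k hd hxk hky
      by_cases hmk : m ≤ k
      · exact step1 k hmk hky
      · have e1 := hQ k hxk (by omega)
        have e2 := hQ (k + q') (by omega) (by omega)
        have e3 := ih (m - (k + q)) (by omega) (k + q) rfl (by omega) (by omega)
        rw [e1, e3, show k + q + q' = k + q' + q by omega, ← e2]
  intro k hxk hky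
  exact step2 (m - k) k rfl hxk hky

/-- For a square `U²` generated by `R ∩ (F ∪ F')` where `R` is a layer of the
pyramid of neighboring equal-period runs `F = T[a..b]`, `F' = T[a'..b']`
(`a < a'`), the first half of `U²` lies in `F` and the second half in `F'`. -/
theorem layer_square_halves (T : List α) (a b a' b' x y p : ℕ) (U : List α) (s : ℕ)
    (hab : a < a')
    (h1 : IsRun T a b) (h2 : IsRun T a' b')
    (hnb : Neighboring a b a' b')
    (hp1 : minPeriod (frag T a b) = p) (hp2 : minPeriod (frag T a' b') = p)
    (hl : IsLayer T a b a' b' x y)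
    (hU : U ≠ [])
    (hocc : OccursAt T s (U ++ U))
    (hin : max x a ≤ s ∧ s + 2 * U.length ≤ min y b' + 1)
    (hgen : minPeriod (U ++ U) = minPeriod (frag T (max x a) (min y b'))) :
    a ≤ s ∧ s + U.length ≤ b + 1 ∧ a' ≤ s + U.length ∧ s + 2 * U.length ≤ b' + 1 := by
  obtain ⟨hab1, hb1, h2pa, hmaxal, hmaxar⟩ := h1
  obtain ⟨hab1', hb1', h2pa', hmaxbl, hmaxbr⟩ := h2
  obtain ⟨hrun, hsub4, hsubp, h2q, hperq⟩ := hl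
  obtain ⟨hxy, hylen, h2qr, _, _⟩ := hrun
  obtain ⟨hocc1, hocc2⟩ := hocc
  obtain ⟨hnb1, hnb2⟩ := hnb
  rw [hp1] at hmaxar hsubp
  rw [hp2] at hmaxbl
  set m := max x a with hm
  set n := min y b' with hn
  set q := minPeriod (frag T x y) with hqdef
  obtain ⟨hms, hs2⟩ := hin
  have hxm : x ≤ m := le_max_left x a
  have ham : a ≤ m := le_max_right x a
  have hny : n ≤ y := min_le_left y b'
  have hnb' : n ≤ b' := min_le_right y b'
  have hUlen : 0 < U.length := List.length_pos_iff.mpr hU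
  have hUUlen : (U ++ U).length = 2 * U.length := by
    rw [List.length_append]; ring
  rw [hUUlen] at hocc1 hocc2
  -- basic period facts
  have hPa : ∀ k, a ≤ k → k + p ≤ b → T[k]? = T[k + p]? := by
    have h := minPeriod_isPeriod (frag T a b) (frag_ne_nil T hab1 hb1)
    rw [hp1] at h
    exact period_of_frag T hab1 hb1 h
  have hp0 : 0 < p := by
    have h := minPeriod_isPeriod (frag T a b) (frag_ne_nil T hab1 hb1)
    rw [hp1] at h
    exact h.1
  have hPa' : ∀ k, a' ≤ k → k + p ≤ b' → T[k]? = T[k + p]? := by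
    have h := minPeriod_isPeriod (frag T a' b') (frag_ne_nil T hab1' hb1')
    rw [hp2] at h
    exact period_of_frag T hab1' hb1' h
  have hPq : ∀ k, x ≤ k → k + q ≤ y → T[k]? = T[k + q]? :=
    period_of_frag T hxy hylen (minPeriod_isPeriod (frag T x y) (frag_ne_nil T hxy hylen))
  have hq0 : 0 < q := (minPeriod_isPeriod (frag T x y) (frag_ne_nil T hxy hylen)).1
  have hmn : m ≤ n := by omega
  have hnlen : n < T.length := lt_of_le_of_lt hny hylen
  have h4p : 4 * p ≤ q := by omega
  -- the minimal period of frag T m n is at least q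
  have hq2per := minPeriod_isPeriod (frag T m n) (frag_ne_nil T hmn hnlen)
  have hq20 : 0 < minPeriod (frag T m n) := hq2per.1
  have hq2len : minPeriod (frag T m n) ≤ n + 1 - m := by
    have := hq2per.2.1
    rwa [frag_length T hmn hnlen] at this
  have hq2ge : q ≤ minPeriod (frag T m n) := by
    by_contra hlt
    push_neg at hlt
    have hQ2 := period_of_frag T hmn hnlen hq2per
    have hchain := chain_period T hq0 hq20 hxm hny (by omega) hPq hQ2
    have hper2 : IsPeriodOf (minPeriod (frag T m n)) (frag T x y) :=
      frag_of_period T hxy hylen hq20 (by omega) hchain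
    have := minPeriod_le hper2
    omega
  -- |U| is large
  have hTocc : ∀ i, i < 2 * U.length → T[s + i]? = (U ++ U)[i]? := by
    intro i hi
    rw [← hocc2, List.getElem?_take_of_lt (by omega), List.getElem?_drop]
  have hUge : 4 * p ≤ U.length := by
    have hperU : IsPeriodOf U.length (U ++ U) := by
      refine ⟨hUlen, by omega, ?_⟩
      intro i hi
      rw [hUUlen] at hi
      rw [List.getElem?_append_left (by omega), List.getElem?_append_right (by omega),
        show i + U.length - U.length = i by omega]
    have h := minPeriod_le hperU
    rw [hgen] at h
    omega
  have hEocc : ∀ k, s ≤ k → k + U.length < s + 2 * U.length →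
      T[k]? = T[k + U.length]? := by
    intro k h1 h2
    have ha := hTocc (k - s) (by omega)
    have hb := hTocc (k - s + U.length) (by omega)
    rw [show s + (k - s) = k by omega] at ha
    rw [show s + (k - s + U.length) = k + U.length by omega] at hb
    rw [ha, hb, List.getElem?_append_left (by omega : k - s < U.length),
      List.getElem?_append_right (by omega : U.length ≤ k - s + U.length),
      show k - s + U.length - U.length = k - s by omega]
  -- a full p-periodicity of U² leads to contradiction
  have hnotp : ¬ (∀ k, s ≤ k → k + p + 1 ≤ s + 2 * U.length →
      T[k]? = T[k + p]?) := by
    intro hLP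
    have hper : IsPeriodOf p (U ++ U) := by
      refine ⟨hp0, by rw [hUUlen]; omega, ?_⟩
      intro i hi
      rw [hUUlen] at hi
      rw [← hTocc i (by omega), ← hTocc (i + p) (by omega)]
      have h := hLP (s + i) (by omega) (by omega)
      rwa [show s + i + p = s + (i + p) by omega] at h
    have h := minPeriod_le hper
    rw [hgen] at h
    omega
  -- goal 1
  have g1 : a ≤ s := le_trans ham hms
  -- goal 2
  have g2 : s + U.length ≤ b + 1 := by
    by_contra hc
    push_neg at hc
    have hI3 : ∀ k, s ≤ k → k + p + 1 ≤ s + U.length → T[k]? = T[k + p]? := by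
      intro k hk hkp
      have e1 := hEocc k hk (by omega)
      have e2 := hEocc (k + p) (by omega) (by omega)
      have e3 := hPa' (k + U.length) (by omega) (by omega)
      rw [e1, e2, show k + p + U.length = k + U.length + p by omega]
      exact e3
    rcases hmaxar with hbl | hne
    · omega
    · by_cases hA : s + p ≤ b + 1
      · have h := hI3 (b + 1 - p) (by omega) (by omega)
        rw [show b + 1 - p + p = b + 1 by omega] at h
        exact hne h.symm
      · refine hnotp (fun k hk hkp => ?_)
        by_cases h : k + p + 1 ≤ s + U.length
        · exact hI3 k hk h
        · exact hPa' k (by omega) (by omega)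
  -- goal 3
  have g3 : a' ≤ s + U.length := by
    by_contra hc
    push_neg at hc
    have hI3' : ∀ k, s + U.length ≤ k → k + p + 1 ≤ s + 2 * U.length →
        T[k]? = T[k + p]? := by
      intro k hk hkp
      have e1 := hEocc (k - U.length) (by omega) (by omega)
      rw [show k - U.length + U.length = k by omega] at e1
      have e2 := hEocc (k + p - U.length) (by omega) (by omega)
      rw [show k + p - U.length + U.length = k + p by omega] at e2
      have e3 := hPa (k - U.length) (by omega) (by omega)
      rw [← e1, ← e2]
      rwa [show k - U.length + p = k + p - U.length by omega] at e3
    rcases hmaxbl with h0 | hne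
    · omega
    · by_cases hA : a' + p ≤ s + 2 * U.length
      · have h := hI3' (a' - 1) (by omega) (by omega)
        exact hne h
      · refine hnotp (fun k hk hkp => ?_)
        by_cases h : s + U.length ≤ k
        · exact hI3' k h hkp
        · exact hPa k (by omega) (by omega)
  exact ⟨g1, g2, g3, by omega⟩
end
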